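/- Let L : H → G be bounded linear with 0 < ‖L‖ ≤ 1, let γ > 0, and let A, B be strictly positive operators on G with A ≼ B. Then L ⊡_γ A ≼ L ⊡_γ B, where L ⊡_γ B = L* ∘ (B⁻¹ + γ(Id_G − L L*))⁻¹ ∘ L. -/

import Mathlib

open ContinuousLinearMap MeasureTheory

noncomputable section

variable {E : Type*} [NormedAddCommGroup E] [InnerProductSpace ℝ E] [CompleteSpace E]
variable {H G : Type*} [NormedAddCommGroup H] [InnerProductSpace ℝ H] [CompleteSpace H]
  [NormedAddCommGroup G] [InnerProductSpace ℝ G] [CompleteSpace G]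

/-- Löwner partial order: `A ≼ B` iff `B - A` is a positive operator. -/
def Loewner (A B : E →L[ℝ] E) : Prop := (B - A).IsPositive

/-- Strictly positive operators: `α • Id ≼ A` for some `α > 0`. -/
def StrictlyPos (A : E →L[ℝ] E) : Prop :=
  IsSelfAdjoint A ∧ ∃ α : ℝ, 0 < α ∧ Loewner (α • (1 : E →L[ℝ] E)) A

/-- Bounded below linear operator. -/
def BoundedBelow (L : H →L[ℝ] G) : Prop := ∃ β : ℝ, 0 < β ∧ ∀ x : H, β * ‖x‖ ≤ ‖L x‖

/-- Resolvent cocomposition `L ⊡_γ B = L* ∘ (B⁻¹ + γ(Id − L L*))⁻¹ ∘ L`. -/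
def rcc (L : H →L[ℝ] G) (γ : ℝ) (B : G →L[ℝ] G) : H →L[ℝ] H :=
  (adjoint L) ∘L (Ring.inverse (Ring.inverse B + γ • ((1 : G →L[ℝ] G) - L ∘L adjoint L))) ∘L L

/-- Resolvent composition `L ⊙_γ B = (L ⊡_{1/γ} B⁻¹)⁻¹`. -/
def rc (L : H →L[ℝ] G) (γ : ℝ) (B : G →L[ℝ] G) : H →L[ℝ] H :=
  Ring.inverse (rcc L (1/γ) (Ring.inverse B))

/-- Parallel composition `L* ▸ B = (L* ∘ B⁻¹ ∘ L)⁻¹`. -/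
def parallelComp (L : H →L[ℝ] G) (B : G →L[ℝ] G) : H →L[ℝ] H :=
  Ring.inverse ((adjoint L) ∘L (Ring.inverse B) ∘L L)

/-- `g(A,B) = inf {λ > 0 : A ≼ λ B}`. -/
def gThomp (A B : E →L[ℝ] E) : ℝ := sInf {l : ℝ | 0 < l ∧ Loewner A (l • B)}

/-- Thompson metric. -/
def dThomp (A B : E →L[ℝ] E) : ℝ := Real.log (max (gThomp A B) (gThomp B A))

/-- The (unique) positive square root of a positive operator. -/
def opSqrt (A : E →L[ℝ] E) : E →L[ℝ] E :=
  letI := Classical.propDecidable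
  if h : ∃ S : E →L[ℝ] E, S.IsPositive ∧ S * S = A then h.choose else 0

/-- Real power `A^t` of a strictly positive operator, `t ∈ (0,1)`, via the
Balakrishnan integral formula `A^t = (sin (π t)/π) ∫₀^∞ s^{t-1} A (A + s)⁻¹ ds`. -/
def opRpow (A : E →L[ℝ] E) (t : ℝ) : E →L[ℝ] E :=
  (Real.sin (Real.pi * t) / Real.pi) •
    ∫ s in Set.Ioi (0 : ℝ), s ^ (t - 1) • (A * Ring.inverse (A + s • (1 : E →L[ℝ] E)))

/-- Geometric mean `A # B = A^{1/2} (A^{-1/2} B A^{-1/2})^{1/2} A^{1/2}`. -/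
def geomMean (A B : E →L[ℝ] E) : E →L[ℝ] E :=
  opSqrt A * opSqrt (Ring.inverse (opSqrt A) * B * Ring.inverse (opSqrt A)) * opSqrt A

/-- `t`-weighted geometric mean `A #_t B = A^{1/2} (A^{-1/2} B A^{-1/2})^t A^{1/2}`. -/
def wGeomMean (t : ℝ) (A B : E →L[ℝ] E) : E →L[ℝ] E :=
  opSqrt A * opRpow (Ring.inverse (opSqrt A) * B * Ring.inverse (opSqrt A)) t * opSqrt A

local notation "⟪" x ", " y "⟫" => @inner ℝ _ _ x y


lemma isPositive_iff_real (T : E →L[ℝ] E) :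
    T.IsPositive ↔ IsSelfAdjoint T ∧ ∀ x, 0 ≤ ⟪T x, x⟫ := by
  simp [ContinuousLinearMap.IsPositive, ContinuousLinearMap.reApplyInnerSelf]
  intro _
  exact isSelfAdjoint_iff_isSymmetric.symm

/-- Cauchy–Schwarz for a positive operator. -/
lemma pos_cauchy_schwarz (T : E →L[ℝ] E) (hT : T.IsPositive) (x y : E) :
    ⟪T x, y⟫ ^ 2 ≤ ⟪T x, x⟫ * ⟪T y, y⟫ := by
  obtain ⟨hsa, hpos⟩ := (isPositive_iff_real T).mp hT
  have hsymm := isSelfAdjoint_iff_isSymmetric.mp hsa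
  have key : ∀ t : ℝ, 0 ≤ ⟪T y, y⟫ * (t * t) + (2 * ⟪T x, y⟫) * t + ⟪T x, x⟫ := by
    intro t
    have h0 := hpos (x + t • y)
    have hyx : ⟪T y, x⟫ = ⟪T x, y⟫ := by
      exact (hsymm y x).trans (real_inner_comm (T x) y)
    have e1 : ⟪T (x + t • y), x + t • y⟫ =
        ⟪T x, x⟫ + t * ⟪T x, y⟫ + t * ⟪T y, x⟫ + t * (t * ⟪T y, y⟫) := by
      simp only [map_add, _root_.map_smul, inner_add_left, inner_add_right,
        real_inner_smul_left, real_inner_smul_right]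
      ring
    rw [e1, hyx] at h0
    nlinarith [h0]
  have hd := discrim_le_zero key
  rw [discrim] at hd
  nlinarith [hd]

lemma strictlyPos_coercive {A : E →L[ℝ] E} {α : ℝ} (h : Loewner (α • (1 : E →L[ℝ] E)) A) :
    ∀ x, α * ‖x‖ ^ 2 ≤ ⟪A x, x⟫ := by
  intro x
  obtain ⟨_, hpos⟩ := (isPositive_iff_real _).mp h
  have := hpos x
  simp only [sub_apply, smul_apply, one_apply_eq_self, inner_sub_left, real_inner_smul_left] at this
  rw [real_inner_self_eq_norm_sq] at this
  linarith

lemma StrictlyPos.isPositive {A : E →L[ℝ] E} (hA : StrictlyPos A) : A.IsPositive := by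
  obtain ⟨hsa, α, hα, hL⟩ := hA
  refine (isPositive_iff_real A).mpr ⟨hsa, fun x => ?_⟩
  have := strictlyPos_coercive hL x
  nlinarith [sq_nonneg ‖x‖]

lemma StrictlyPos.isUnit {A : E →L[ℝ] E} (hA : StrictlyPos A) : IsUnit A := by
  obtain ⟨hsa, α, hα, hL⟩ := hA
  have hcoer := strictlyPos_coercive hL
  -- bounded below
  have hbb : ∀ x, α * ‖x‖ ≤ ‖A x‖ := by
    intro x
    rcases eq_or_ne x 0 with rfl | hx
    · simp
    · have h1 : α * ‖x‖ ^ 2 ≤ ⟪A x, x⟫ := hcoer x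
      have h2 : ⟪A x, x⟫ ≤ ‖A x‖ * ‖x‖ := real_inner_le_norm _ _
      have hx0 : 0 < ‖x‖ := norm_pos_iff.mpr hx
      nlinarith
  have hker : LinearMap.ker (A : E →ₗ[ℝ] E) = ⊥ := by
    rw [LinearMap.ker_eq_bot']
    intro x hx
    have := hbb x
    rw [show A x = 0 from hx, norm_zero] at this
    have : ‖x‖ ≤ 0 := by nlinarith [norm_nonneg x]
    simpa using le_antisymm this (norm_nonneg x)
  have hanti : AntilipschitzWith (⟨α⁻¹, by positivity⟩ : NNReal) A := by
    apply A.antilipschitz_of_bound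
    intro x
    have := hbb x
    show ‖x‖ ≤ α⁻¹ * ‖A x‖
    calc ‖x‖ = α⁻¹ * (α * ‖x‖) := by field_simp
    _ ≤ α⁻¹ * ‖A x‖ := mul_le_mul_of_nonneg_left this (by positivity)
  have hclosed : IsClosed (LinearMap.range (A : E →ₗ[ℝ] E) : Set E) := by
    have := hanti.isClosed_range A.uniformContinuous
    convert this using 1
    exact LinearMap.coe_range _
  haveI : CompleteSpace (LinearMap.range (A : E →ₗ[ℝ] E) : Submodule ℝ E) := hclosed.completeSpace_coe
  have hrange : LinearMap.range (A : E →ₗ[ℝ] E) = ⊤ := by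
    rw [← Submodule.orthogonal_eq_bot_iff]
    rw [Submodule.eq_bot_iff]
    intro y hy
    have hAy : A y ∈ LinearMap.range (A : E →ₗ[ℝ] E) := LinearMap.mem_range_self _ y
    have h0 : ⟪A y, y⟫ = 0 := hy (A y) hAy
    have := hcoer y
    rw [h0] at this
    have hy0 : ‖y‖ ^ 2 ≤ 0 := by nlinarith
    have : ‖y‖ = 0 := by nlinarith [sq_nonneg ‖y‖, norm_nonneg y]
    simpa using this
  let e := ContinuousLinearEquiv.ofBijective A hker hrange
  refine ⟨⟨A, (e.symm : E →L[ℝ] E), ?_, ?_⟩, rfl⟩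
  · ext x
    simp only [mul_apply_eq_comp, one_apply_eq_self, ContinuousLinearEquiv.coe_coe]
    have : A (e.symm x) = e (e.symm x) := by
      rw [ContinuousLinearEquiv.coeFn_ofBijective]
    rw [this, e.apply_symm_apply]
  · ext x
    simp only [mul_apply_eq_comp, one_apply_eq_self, ContinuousLinearEquiv.coe_coe]
    have : A x = e x := by rw [ContinuousLinearEquiv.coeFn_ofBijective]
    rw [this, e.symm_apply_apply]

lemma ring_inverse_apply_cancel {A : E →L[ℝ] E} (hU : IsUnit A) (x : E) :
    A (Ring.inverse A x) = x := by
  have h := Ring.mul_inverse_cancel A hU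
  calc A (Ring.inverse A x) = (A * Ring.inverse A) x := rfl
  _ = x := by rw [h]; rfl

lemma ring_inverse_selfAdjoint {A : E →L[ℝ] E} (hA : IsSelfAdjoint A) :
    IsSelfAdjoint (Ring.inverse A) := by
  rw [IsSelfAdjoint, ← Ring.inverse_star, hA.star_eq]

lemma StrictlyPos.inverse {A : E →L[ℝ] E} (hA : StrictlyPos A) :
    StrictlyPos (Ring.inverse A) := by
  obtain ⟨hsa, α, hα, hL⟩ := hA
  have hU : IsUnit A := StrictlyPos.isUnit ⟨hsa, α, hα, hL⟩
  have hcoer := strictlyPos_coercive hL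
  refine ⟨ring_inverse_selfAdjoint hsa, α / (‖A‖ + 1) ^ 2, by positivity, ?_⟩
  rw [Loewner, isPositive_iff_real]
  constructor
  · exact ((ring_inverse_selfAdjoint hsa).sub (IsSelfAdjoint.smul (star_trivial _) (IsSelfAdjoint.one _)))
  · intro x
    set u := Ring.inverse A x with hu
    have hAu : A u = x := ring_inverse_apply_cancel hU x
    have h1 : ⟪Ring.inverse A x, x⟫ = ⟪A u, u⟫ := by
      rw [← hu, ← hAu, real_inner_comm]
    have h2 : α * ‖u‖ ^ 2 ≤ ⟪A u, u⟫ := hcoer u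
    have h3 : ‖x‖ ≤ (‖A‖ + 1) * ‖u‖ := by
      rw [← hAu]
      calc ‖A u‖ ≤ ‖A‖ * ‖u‖ := A.le_opNorm u
      _ ≤ (‖A‖ + 1) * ‖u‖ := by nlinarith [norm_nonneg u]
    have hA1 : (0:ℝ) < ‖A‖ + 1 := by positivity
    simp only [sub_apply, smul_apply, one_apply_eq_self, inner_sub_left, real_inner_smul_left]
    rw [real_inner_self_eq_norm_sq, h1, sub_nonneg, div_mul_eq_mul_div,
      div_le_iff₀ (by positivity)]
    have h3' : ‖x‖ ^ 2 ≤ ((‖A‖ + 1) * ‖u‖) ^ 2 := by nlinarith [norm_nonneg x]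
    nlinarith [mul_le_mul_of_nonneg_left h3' hα.le,
      mul_le_mul_of_nonneg_left h2 (sq_nonneg (‖A‖ + 1))]

lemma inverse_antitone {A B : E →L[ℝ] E} (hA : StrictlyPos A) (hB : StrictlyPos B)
    (hAB : Loewner A B) : Loewner (Ring.inverse B) (Ring.inverse A) := by
  have hUA := hA.isUnit
  have hUB := hB.isUnit
  rw [Loewner, isPositive_iff_real]
  refine ⟨(ring_inverse_selfAdjoint hA.1).sub (ring_inverse_selfAdjoint hB.1), fun x => ?_⟩
  set u := Ring.inverse B x with hu
  set v := Ring.inverse A x with hv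
  have hBu : B u = x := ring_inverse_apply_cancel hUB x
  have hAv : A v = x := ring_inverse_apply_cancel hUA x
  have hApos := hA.isPositive
  have hBpos := hB.isPositive
  have hsymmA := isSelfAdjoint_iff_isSymmetric.mp hA.1
  -- s = ⟪B⁻¹ x, x⟫, t = ⟪A⁻¹ x, x⟫
  have hs : ⟪Ring.inverse B x, x⟫ = ⟪B u, u⟫ := by
    rw [← hu, ← hBu, real_inner_comm]
  have ht : ⟪Ring.inverse A x, x⟫ = ⟪A v, v⟫ := by
    rw [← hv, ← hAv, real_inner_comm]
  have hcs : ⟪A u, v⟫ ^ 2 ≤ ⟪A u, u⟫ * ⟪A v, v⟫ := pos_cauchy_schwarz A hApos u v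
  have hmid : ⟪A u, v⟫ = ⟪B u, u⟫ := by
    calc ⟪A u, v⟫ = ⟪u, A v⟫ := hsymmA u v
    _ = ⟪u, x⟫ := by rw [hAv]
    _ = ⟪u, B u⟫ := by rw [hBu]
    _ = ⟪B u, u⟫ := real_inner_comm _ _
  have hle : ⟪A u, u⟫ ≤ ⟪B u, u⟫ := by
    obtain ⟨_, h⟩ := (isPositive_iff_real _).mp hAB
    have := h u
    simp only [sub_apply, inner_sub_left] at this
    linarith
  have hAuu : (0:ℝ) ≤ ⟪A u, u⟫ := ((isPositive_iff_real A).mp hApos).2 u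
  have hAvv : (0:ℝ) ≤ ⟪A v, v⟫ := ((isPositive_iff_real A).mp hApos).2 v
  have key : ⟪B u, u⟫ ≤ ⟪A v, v⟫ := by
    rcases eq_or_lt_of_le (hAuu.trans hle) with h0 | h0
    · rw [hmid, ← h0] at hcs
      nlinarith
    · nlinarith
  simp only [sub_apply, inner_sub_left]
  rw [hs, ht] at *
  linarith

theorem rcc_monotone (L : H →L[ℝ] G) (hL0 : 0 < ‖L‖) (hL1 : ‖L‖ ≤ 1)
    (γ : ℝ) (hγ : 0 < γ) (A B : G →L[ℝ] G) (hA : StrictlyPos A) (hB : StrictlyPos B)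
    (hAB : Loewner A B) : Loewner (rcc L γ A) (rcc L γ B) := by
  set Ψ : G →L[ℝ] G := (1 : G →L[ℝ] G) - L ∘L adjoint L with hΨdef
  have hΨsa : IsSelfAdjoint Ψ := by
    rw [IsSelfAdjoint, hΨdef, star_sub, star_one, star_eq_adjoint, adjoint_comp, adjoint_adjoint]
  have hΨpos : Ψ.IsPositive := by
    rw [isPositive_iff_real]
    refine ⟨hΨsa, fun x => ?_⟩
    have h1 : ⟪(L ∘L adjoint L) x, x⟫ = ‖adjoint L x‖ ^ 2 := by
      calc ⟪(L ∘L adjoint L) x, x⟫ = ⟪x, L (adjoint L x)⟫ := real_inner_comm _ _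
      _ = ⟪adjoint L x, adjoint L x⟫ := (adjoint_inner_left L (adjoint L x) x).symm
      _ = ‖adjoint L x‖ ^ 2 := real_inner_self_eq_norm_sq _
    have h2 : ‖adjoint L x‖ ≤ ‖x‖ := by
      calc ‖adjoint L x‖ ≤ ‖adjoint L‖ * ‖x‖ := (adjoint L).le_opNorm x
      _ = ‖L‖ * ‖x‖ := by rw [adjoint.norm_map L]
      _ ≤ 1 * ‖x‖ := by nlinarith [norm_nonneg x]
      _ = ‖x‖ := one_mul _
    simp only [hΨdef, sub_apply, one_apply_eq_self, inner_sub_left]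
    rw [h1, real_inner_self_eq_norm_sq]
    nlinarith [norm_nonneg x, norm_nonneg (adjoint L x)]
  have hγΨpos : (γ • Ψ).IsPositive := by
    rw [isPositive_iff_real]
    refine ⟨IsSelfAdjoint.smul (star_trivial _) hΨsa, fun x => ?_⟩
    simp only [smul_apply, real_inner_smul_left]
    exact mul_nonneg hγ.le (((isPositive_iff_real Ψ).mp hΨpos).2 x)
  have hAinv := hA.inverse
  have hBinv := hB.inverse
  set CA : G →L[ℝ] G := Ring.inverse A + γ • Ψ with hCAdef
  set CB : G →L[ℝ] G := Ring.inverse B + γ • Ψ with hCBdef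
  have hCA : StrictlyPos CA := by
    obtain ⟨hsa, α, hα, hL'⟩ := hAinv
    refine ⟨hsa.add (IsSelfAdjoint.smul (star_trivial _) hΨsa), α, hα, ?_⟩
    rw [Loewner]
    have : CA - α • (1 : G →L[ℝ] G) = (Ring.inverse A - α • 1) + γ • Ψ := by
      rw [hCAdef]; abel
    rw [this]
    exact hL'.add hγΨpos
  have hCB : StrictlyPos CB := by
    obtain ⟨hsa, α, hα, hL'⟩ := hBinv
    refine ⟨hsa.add (IsSelfAdjoint.smul (star_trivial _) hΨsa), α, hα, ?_⟩
    rw [Loewner]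
    have : CB - α • (1 : G →L[ℝ] G) = (Ring.inverse B - α • 1) + γ • Ψ := by
      rw [hCBdef]; abel
    rw [this]
    exact hL'.add hγΨpos
  have hBA : Loewner CB CA := by
    rw [Loewner]
    have : CA - CB = Ring.inverse A - Ring.inverse B := by rw [hCAdef, hCBdef]; abel
    rw [this]
    exact inverse_antitone hA hB hAB
  have hfinal : Loewner (Ring.inverse CA) (Ring.inverse CB) := inverse_antitone hCB hCA hBA
  rw [Loewner]
  have heq : rcc L γ B - rcc L γ A
      = adjoint L ∘L (Ring.inverse CB - Ring.inverse CA) ∘L L := by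
    rw [rcc, rcc, ← hΨdef, ← hCAdef, ← hCBdef]
    ext x
    simp [sub_apply, comp_apply, map_sub]
  rw [heq]
  exact IsPositive.adjoint_conj hfinal L


end
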